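/- Let G be a chordal graph, let X ⊆ V(G) be a clique, and let L₁, …, L_t be the evaporation sequence of G with exception set X. For i ∈ {1,…,t} let G_i denote the induced subgraph G − (L₁ ∪ … ∪ L_{i−1}). If G − X is connected, then G_i − X is connected for all i ∈ {1,…,t}. -/
import Mathlib


/-- A graph is chordal if it contains no induced cycle of length at least 4. -/
def IsChordal {V : Type*} (G : SimpleGraph V) : Prop :=
  ∀ n : ℕ, 4 ≤ n → IsEmpty (SimpleGraph.cycleGraph n ↪g G)

/-- The neighborhood of `v` inside the induced subgraph of `G` on the vertex set `R`. -/
def nbhdIn {V : Type*} (G : SimpleGraph V) (R : Set V) (v : V) : Set V :=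
  {u | u ∈ R ∧ G.Adj u v}

/-- `v` is simplicial in the induced subgraph of `G` on `R`:
its neighborhood there is a clique. -/
def SimplicialIn {V : Type*} (G : SimpleGraph V) (R : Set V) (v : V) : Prop :=
  G.IsClique (nbhdIn G R v)

/-- The set of vertices remaining after `n` steps of the evaporation process of `G` with
exception set `X`: at each step all simplicial vertices of the current induced subgraph that
are not in `X` are removed. -/
def evapR {V : Type*} (G : SimpleGraph V) (X : Set V) : ℕ → Set V
  | 0 => Set.univ
  | n + 1 =>
      evapR G X n \ {v | v ∈ evapR G X n ∧ v ∉ X ∧ SimplicialIn G (evapR G X n) v}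

/-- The `i`-th set `L_i` of the evaporation sequence (for `i ≥ 1`): the vertices removed at
step `i` of the evaporation process. -/
def evapLayer {V : Type*} (G : SimpleGraph V) (X : Set V) (i : ℕ) : Set V :=
  evapR G X (i - 1) \ evapR G X i

/-- The evaporation time of `G` with exception set `X`: the length `t` of the evaporation
sequence, i.e. the least `t` with `evapR G X t = X`. -/
noncomputable def evapTime {V : Type*} (G : SimpleGraph V) (X : Set V) : ℕ :=
  sInf {t | evapR G X t = X}

/-- The evaporation time of a vertex subset `S`: the largest index `i` such that
`L_i ∩ S ≠ ∅`. -/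
noncomputable def evapTimeOf {V : Type*} (G : SimpleGraph V) (X S : Set V) : ℕ :=
  sSup {i | (evapLayer G X i ∩ S).Nonempty}

/-- `C` is a connected component of the induced subgraph of `G` on `S`:
a maximal subset of `S` inducing a connected subgraph. -/
def IsCompOf {V : Type*} (G : SimpleGraph V) (S C : Set V) : Prop :=
  C.Nonempty ∧ C ⊆ S ∧ (G.induce C).Connected ∧
    ∀ D, C ⊆ D → D ⊆ S → (G.induce D).Connected → D = C

/-- The open neighborhood `N(S)` of a set of vertices. -/
def setNbhd {V : Type*} (G : SimpleGraph V) (S : Set V) : Set V :=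
  {v | v ∉ S ∧ ∃ u ∈ S, G.Adj u v}

/-! ### Auxiliary machinery -/

/-- Adjacency within a vertex set `S`. -/
def RelIn {V : Type*} (G : SimpleGraph V) (S : Set V) (a b : V) : Prop :=
  a ∈ S ∧ b ∈ S ∧ G.Adj a b

/-- From reachability in the induced subgraph to `ReflTransGen` of `RelIn`. -/
lemma reflTransGen_of_induce_reachable {V : Type*} {G : SimpleGraph V} {S : Set V}
    {u v : S} (h : (G.induce S).Reachable u v) :
    Relation.ReflTransGen (RelIn G S) u.1 v.1 := by
  obtain ⟨w⟩ := h
  induction w with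
  | nil => exact Relation.ReflTransGen.refl
  | @cons a b c h p ih =>
    exact Relation.ReflTransGen.head ⟨a.2, b.2, h⟩ ih

/-- From `ReflTransGen` of `RelIn` to reachability in the induced subgraph. -/
lemma induce_reachable_of_reflTransGen {V : Type*} {G : SimpleGraph V} {S : Set V}
    {x y : V} (h : Relation.ReflTransGen (RelIn G S) x y) :
    ∀ (hx : x ∈ S) (hy : y ∈ S), (G.induce S).Reachable ⟨x, hx⟩ ⟨y, hy⟩ := by
  induction h using Relation.ReflTransGen.head_induction_on with
  | refl => intro hx hy; exact SimpleGraph.Reachable.refl _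
  | head hab h ih =>
    intro hx hy
    have hadj : (G.induce S).Adj ⟨_, hx⟩ ⟨_, hab.2.1⟩ := hab.2.2
    exact SimpleGraph.Reachable.trans hadj.reachable (ih hab.2.1 hy)

/-- `X` never evaporates. -/
lemma X_subset_evapR {V : Type*} (G : SimpleGraph V) (X : Set V) :
    ∀ n, X ⊆ evapR G X n := by
  intro n
  induction n with
  | zero => exact Set.subset_univ X
  | succ n ih =>
    intro x hx
    exact ⟨ih hx, fun hmem => hmem.2.1 hx⟩

lemma evapR_succ_subset {V : Type*} (G : SimpleGraph V) (X : Set V) (n : ℕ) :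
    evapR G X (n + 1) ⊆ evapR G X n := Set.diff_subset

/-- The key shortcut lemma: a chain in `S` between two vertices of `T` can be turned into a
chain in `T`, provided every vertex of `S \ T` is simplicial in a superset `R ⊇ S`. -/
lemma chain_shortcut {V : Type*} (G : SimpleGraph V) (R S T : Set V)
    (hSR : S ⊆ R)
    (hsimp : ∀ u ∈ S, u ∉ T → SimplicialIn G R u) :
    ∀ (N : ℕ) (l : List V), l.length ≤ N → ∀ x y : V, List.Chain (RelIn G S) x l →
      List.getLast (x :: l) (List.cons_ne_nil _ _) = y → x ∈ T → y ∈ T →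
      Relation.ReflTransGen (RelIn G T) x y := by
  intro N
  induction N with
  | zero =>
    intro l hl x y hchain hlast hx hy
    have : l = [] := List.eq_nil_of_length_eq_zero (Nat.le_zero.mp hl)
    subst this
    simp only [List.getLast_singleton] at hlast
    subst hlast
    exact Relation.ReflTransGen.refl
  | succ N ih =>
    intro l hl x y hchain hlast hx hy
    match l with
    | [] =>
      simp only [List.getLast_singleton] at hlast
      subst hlast
      exact Relation.ReflTransGen.refl
    | u :: l' =>
      rw [List.getLast_cons_cons] at hlast
      have hxu : RelIn G S x u := (List.chain_cons.mp hchain).1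
      have hchain' : List.Chain (RelIn G S) u l' := (List.chain_cons.mp hchain).2
      simp only [List.length_cons] at hl
      by_cases hu : u ∈ T
      · exact Relation.ReflTransGen.head ⟨hx, hu, hxu.2.2⟩
          (ih l' (by omega) u y hchain' hlast hu hy)
      · have husimp : SimplicialIn G R u := hsimp u hxu.2.1 hu
        match l' with
        | [] =>
          simp only [List.getLast_singleton] at hlast
          exact absurd (hlast ▸ hy) hu
        | v :: l'' =>
          have huv : RelIn G S u v := (List.chain_cons.mp hchain').1
          have hchain'' : List.Chain (RelIn G S) v l'' := (List.chain_cons.mp hchain').2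
          rw [List.getLast_cons_cons] at hlast
          have hxN : x ∈ nbhdIn G R u := ⟨hSR hxu.1, hxu.2.2⟩
          have hvN : v ∈ nbhdIn G R u := ⟨hSR huv.2.1, (huv.2.2).symm⟩
          simp only [List.length_cons] at hl
          rcases eq_or_ne x v with hxv | hxv
          · subst hxv
            exact ih l'' (by omega) x y hchain'' hlast hx hy
          · have hadj : G.Adj x v := husimp hxN hvN hxv
            have hchain3 : List.Chain (RelIn G S) x (v :: l'') :=
              List.chain_cons.mpr ⟨⟨hxu.1, huv.2.1, hadj⟩, hchain''⟩
            exact ih (v :: l'') (by simp; omega) x y hchain3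
              (by rw [List.getLast_cons_cons]; exact hlast) hx hy

/-- Shortcut lemma in `ReflTransGen` form. -/
lemma reflTransGen_shortcut {V : Type*} (G : SimpleGraph V) (R S T : Set V)
    (hSR : S ⊆ R)
    (hsimp : ∀ u ∈ S, u ∉ T → SimplicialIn G R u)
    {x y : V} (h : Relation.ReflTransGen (RelIn G S) x y) (hx : x ∈ T) (hy : y ∈ T) :
    Relation.ReflTransGen (RelIn G T) x y := by
  obtain ⟨l, hl1, hl2⟩ := List.exists_isChain_cons_of_relationReflTransGen h
  exact chain_shortcut G R S T hSR hsimp l.length l le_rfl x y hl1 hl2 hx hy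

/-- Let `G` be chordal, `X` a clique, `L₁, …, L_t` the evaporation sequence
of `G` with exception set `X`, and `G_i = G − (L₁ ∪ ⋯ ∪ L_{i-1})`. If `G − X` is connected,
then `G_i − X` is connected for all `i ∈ {1,…,t}`. -/
theorem evapR_sdiff_connected {V : Type*} [Fintype V] (G : SimpleGraph V) (X : Set V)
    (hch : IsChordal G) (hX : G.IsClique X) (hconn : (G.induce Xᶜ).Connected) :
    ∀ i, 1 ≤ i → i ≤ evapTime G X → (G.induce (evapR G X (i - 1) \ X)).Connected := by
  -- relational connectivity of evapR n \ X for all n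
  have key : ∀ n, ∀ x ∈ evapR G X n \ X, ∀ y ∈ evapR G X n \ X,
      Relation.ReflTransGen (RelIn G (evapR G X n \ X)) x y := by
    intro n
    induction n with
    | zero =>
      intro x hx y hy
      have hx' : x ∈ Xᶜ := hx.2
      have hy' : y ∈ Xᶜ := hy.2
      have h1 : Relation.ReflTransGen (RelIn G Xᶜ) x y :=
        reflTransGen_of_induce_reachable (hconn ⟨x, hx'⟩ ⟨y, hy'⟩)
      have hset : (Xᶜ : Set V) = evapR G X 0 \ X := by
        simp [evapR, Set.compl_eq_univ_diff]
      rw [hset] at h1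
      exact h1
    | succ n ih =>
      intro x hx y hy
      have hTS : evapR G X (n + 1) \ X ⊆ evapR G X n \ X :=
        Set.diff_subset_diff_left (evapR_succ_subset G X n)
      have h1 := ih x (hTS hx) y (hTS hy)
      refine reflTransGen_shortcut G (evapR G X n) (evapR G X n \ X) (evapR G X (n + 1) \ X)
        Set.diff_subset ?_ h1 hx hy
      intro u hu hunot
      have hu1 : u ∈ evapR G X n := hu.1
      have hu2 : u ∉ X := hu.2
      have hnot : u ∉ evapR G X (n + 1) := fun h => hunot ⟨h, hu2⟩
      have hmem : u ∈ {v | v ∈ evapR G X n ∧ v ∉ X ∧ SimplicialIn G (evapR G X n) v} := by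
        by_contra h
        exact hnot (show u ∈ evapR G X n \ _ from ⟨hu1, h⟩)
      exact hmem.2.2
  intro i hi1 hi2
  have hlt : i - 1 < evapTime G X := by omega
  have hne : (evapR G X (i - 1) \ X).Nonempty := by
    by_contra hempty
    have hsub : evapR G X (i - 1) ⊆ X := by
      intro v hv
      by_contra hvX
      exact hempty ⟨v, hv, hvX⟩
    have heq : evapR G X (i - 1) = X :=
      Set.Subset.antisymm hsub (X_subset_evapR G X (i - 1))
    have : evapTime G X ≤ i - 1 := Nat.sInf_le heq
    omega
  obtain ⟨v0, hv0⟩ := hne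
  rw [SimpleGraph.connected_iff]
  refine ⟨?_, ⟨⟨v0, hv0⟩⟩⟩
  rintro ⟨x, hx⟩ ⟨y, hy⟩
  exact induce_reachable_of_reflTransGen (key (i - 1) x hx y hy) hx hy
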